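/- arXiv:2509.16034 — 2 statements merged into one kernel-verified Lean document; each statement's English description precedes it below -/
import Mathlib

section
/- If w is a nonempty binary word containing exactly α alternations, then μ(w) contains exactly 2|w| − 1 − α alternations, where μ is the Thue–Morse morphism 0→01, 1→10. -/
/-- The reduction of a word: replace each maximal run of identical characters
by a single character. -/
def red {α : Type*} [DecidableEq α] (w : List α) : List α :=
  w.destutter (· ≠ ·)

/-- The length-`k` factor of the infinite sequence `x` (1-indexed) starting at
position `i`. -/
def factorAt {α : Type*} (x : ℕ → α) (i k : ℕ) : List α :=
  (List.range k).map (fun j => x (i + j))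

/-- The reduced factor complexity: the number of length-`n` factors of `x`,
counted up to reduced-equivalence (`red v = red w`). -/
noncomputable def redFactorComplexity {α : Type*} [DecidableEq α]
    (x : ℕ → α) (n : ℕ) : ℕ :=
  Set.ncard { u : List α | ∃ i ≥ 1, u = red (factorAt x i n) }

/-- The Thue–Morse sequence (1-indexed): `t n` is the parity of the number of
1's in the binary expansion of `n - 1`. -/
def thueMorse (n : ℕ) : Bool :=
  decide ((Nat.digits 2 (n - 1)).sum % 2 = 1)

/-- The number of alternations (occurrences of 01 or 10) in a binary word. -/
def alt (w : List Bool) : ℕ :=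
  (List.zipWith (fun a b => a != b) w w.tail).count true

/-- The minimum number of alternations among length-`k` factors of Thue–Morse. -/
noncomputable def tmAltMin (k : ℕ) : ℕ :=
  sInf { a : ℕ | ∃ i ≥ 1, a = alt (factorAt thueMorse i k) }

/-- The maximum number of alternations among length-`k` factors of Thue–Morse. -/
noncomputable def tmAltMax (k : ℕ) : ℕ :=
  sSup { a : ℕ | ∃ i ≥ 1, a = alt (factorAt thueMorse i k) }

/-- The Thue–Morse morphism `0 → 01`, `1 → 10`. -/
def mu (w : List Bool) : List Bool :=
  w.flatMap (fun b => if b then [true, false] else [false, true])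

/-- The regular paperfolding sequence (1-indexed): writing `n = n' * 2^k` with
`n'` odd, `f n = 1` iff `n' ≡ 3 (mod 4)`. -/
def paperfold (n : ℕ) : Bool :=
  decide ((n / 2 ^ (n.factorization 2)) % 4 = 3)

/-- The reduced abelian complexity: the number of length-`n` factors of `x`,
counted up to the equivalence identifying `v` and `w` whenever `red v` is a
rearrangement of the characters of `red w`. -/
noncomputable def redAbelianComplexity {α : Type*} [DecidableEq α]
    (x : ℕ → α) (n : ℕ) : ℕ :=
  Set.ncard { m : Multiset α | ∃ i ≥ 1, m = ↑(red (factorAt x i n)) }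

lemma alt_cons_cons (a b : Bool) (l : List Bool) :
    alt (a :: b :: l) = (if a = b then 0 else 1) + alt (b :: l) := by
  simp only [alt, List.tail_cons, List.zipWith_cons_cons, List.count_cons]
  cases a <;> cases b <;> simp <;> omega

lemma alt_le (b : Bool) (l : List Bool) : alt (b :: l) ≤ l.length := by
  calc alt (b :: l) ≤ (List.zipWith (fun a b => a != b) (b :: l) l).length :=
        List.count_le_length
    _ ≤ l.length := by simp [List.length_zipWith]

lemma mu_cons (b : Bool) (l : List Bool) :
    mu (b :: l) = b :: (!b) :: mu l := by
  cases b <;> simp [mu]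

theorem stmt1 (w : List Bool) (hw : w ≠ []) (a : ℕ) (ha : alt w = a) :
    alt (mu w) = 2 * w.length - 1 - a := by
  subst ha
  induction w with
  | nil => exact absurd rfl hw
  | cons b l ih =>
    cases l with
    | nil => cases b <;> simp [alt, mu]
    | cons c l' =>
      have ih' := ih (by simp)
      have hle := alt_le c l'
      rw [mu_cons b, mu_cons c, alt_cons_cons b (!b), alt_cons_cons (!b) c,
        ← mu_cons, ih', alt_cons_cons b c]
      simp only [List.length_cons] at *
      cases b <;> cases c <;> simp <;> omega
end

section
/- For every positive integer n, the reduced factor complexity of the regular paperfolding sequence satisfies ρ_f^red(2n) = 4. -/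
def altL : Bool → ℕ → List Bool
  | _, 0 => []
  | b, n+1 => b :: altL (!b) n

def db (i : ℕ) : ℕ := if paperfold i = paperfold (i+1) then 0 else 1

lemma altL_length (b : Bool) (k : ℕ) : (altL b k).length = k := by
  induction k generalizing b with
  | zero => rfl
  | succ k ih => simp [altL, ih]

lemma factorAt_succ {α : Type*} (x : ℕ → α) (i k : ℕ) :
    factorAt x i (k+1) = x i :: factorAt x (i+1) k := by
  simp only [factorAt, List.range_succ_eq_map, List.map_cons, List.map_map,
    Function.comp_def, Nat.add_zero]
  congr 1
  apply List.map_congr_left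
  intro j _
  congr 1
  omega

lemma red_pair (a b : Bool) : red [a, b] = altL a (1 + (if a = b then 0 else 1)) := by
  cases a <;> cases b <;> decide

lemma red_prepend (a h : Bool) (t : List Bool) (K : ℕ)
    (hr : red (h :: t) = altL h K) :
    red (a :: h :: t) = altL a (K + (if a = h then 0 else 1)) := by
  by_cases hab : a = h
  · subst hab
    simp only [if_true, Nat.add_zero]
    rw [← hr]
    show List.destutter' (· ≠ ·) a (a :: t) = List.destutter' (· ≠ ·) a t
    simp [List.destutter']
  · have hba : h = !a := by cases a <;> cases h <;> simp_all
    simp only [hab, if_false]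
    show List.destutter' (· ≠ ·) a (h :: t) = altL a (K + 1)
    rw [List.destutter']
    simp only [if_pos hab]
    show a :: List.destutter (· ≠ ·) (h :: t) = _
    have : List.destutter (fun x1 x2 => x1 ≠ x2) (h :: t) = altL h K := hr
    rw [this]
    simp [altL, ← hba]

lemma red_prepend_pf (i : ℕ) (t : List Bool) (K : ℕ)
    (hr : red (paperfold (i+1) :: t) = altL (paperfold (i+1)) K) :
    red (paperfold i :: paperfold (i+1) :: t) = altL (paperfold i) (K + db i) := by
  rw [red_prepend _ _ _ _ hr]
  unfold db
  rfl

lemma pf_odd (k : ℕ) : paperfold (2*k+1) = decide ((2*k+1) % 4 = 3) := by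
  unfold paperfold
  have h : (2*k+1).factorization 2 = 0 :=
    Nat.factorization_eq_zero_of_not_dvd (by omega)
  rw [h]
  simp

lemma pf_double (k : ℕ) (hk : k ≠ 0) : paperfold (2*k) = paperfold k := by
  unfold paperfold
  have h2 : (2*k).factorization 2 = k.factorization 2 + 1 := by
    rw [Nat.factorization_mul two_ne_zero hk]
    simp [Nat.Prime.factorization Nat.prime_two, add_comm]
  rw [h2, pow_succ, mul_comm (2 ^ k.factorization 2) 2, Nat.mul_div_mul_left _ _ (by norm_num)]

lemma db_pair (m : ℕ) : db (2*m+1) + db (2*m+2) = 1 := by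
  have hx : paperfold (2*m+1) ≠ paperfold (2*m+3) := by
    rw [pf_odd m, show 2*m+3 = 2*(m+1)+1 by ring, pf_odd (m+1)]
    rcases Nat.even_or_odd m with ⟨t, ht⟩ | ⟨t, ht⟩
    · have h1 : (2*m+1) % 4 = 1 := by omega
      have h2 : (2*(m+1)+1) % 4 = 3 := by omega
      rw [h1, h2]; simp
    · have h1 : (2*m+1) % 4 = 3 := by omega
      have h2 : (2*(m+1)+1) % 4 = 1 := by omega
      rw [h1, h2]; simp
  have key : ∀ a b c : Bool, a ≠ c →
      ((if a = b then 0 else 1) + (if b = c then 0 else 1)) = 1 := by decide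
  simp only [db, show 2*m+1+1 = 2*m+2 from rfl, show 2*m+2+1 = 2*m+3 from rfl]
  exact key _ _ _ hx

lemma factorAt_two {α : Type*} (x : ℕ → α) (i : ℕ) :
    factorAt x i 2 = [x i, x (i+1)] := by
  rw [show (2:ℕ) = 1 + 1 from rfl, factorAt_succ, factorAt_succ]
  rfl

lemma red_two (i : ℕ) : red (factorAt paperfold i 2) = altL (paperfold i) (1 + db i) := by
  rw [factorAt_two, red_pair]
  unfold db
  rfl

lemma red_step (i L K : ℕ)
    (h : red (factorAt paperfold (i+1+1) (L+1)) = altL (paperfold (i+1+1)) K) :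
    red (factorAt paperfold i (L+1+1+1)) = altL (paperfold i) (K + db (i+1) + db i) := by
  rw [factorAt_succ, factorAt_succ, factorAt_succ]
  rw [factorAt_succ] at h
  exact red_prepend_pf i _ _ (red_prepend_pf (i+1) _ _ h)

lemma red_even (n : ℕ) : ∀ m : ℕ,
    red (factorAt paperfold (2*m) (2*n+2)) =
      altL (paperfold (2*m)) (n + 1 + db (2*m)) := by
  induction n with
  | zero =>
    intro m
    simpa using red_two (2*m)
  | succ n ih =>
    intro m
    have hu := ih (m+1)
    rw [show 2*(m+1) = 2*m+1+1 by ring] at hu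
    have h := red_step (2*m) (2*n+1) _ hu
    rw [show 2*(n+1)+2 = 2*n+1+1+1+1 by ring, h]
    have hp := db_pair m
    rw [show 2*m+1+1 = 2*m+2 from rfl]
    congr 1
    omega

lemma red_odd (n : ℕ) : ∀ m : ℕ,
    red (factorAt paperfold (2*m+1) (2*n+2)) =
      altL (paperfold (2*m+1)) (n + 1 + db (2*m+2*n+1)) := by
  induction n with
  | zero =>
    intro m
    simpa using red_two (2*m+1)
  | succ n ih =>
    intro m
    have hu := ih (m+1)
    rw [show 2*(m+1)+1 = 2*m+1+1+1 by ring,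
        show 2*(m+1)+2*n+1 = 2*m+2*n+3 by ring] at hu
    have h := red_step (2*m+1) (2*n+1) _ hu
    rw [show 2*(n+1)+2 = 2*n+1+1+1+1 by ring, h,
        show 2*m+2*(n+1)+1 = 2*m+2*n+3 by ring]
    have hp := db_pair m
    rw [show 2*m+1+1 = 2*m+2 from rfl]
    congr 1
    omega

lemma pf2 : paperfold 2 = false := by
  rw [show (2:ℕ) = 2*1 from rfl, pf_double 1 one_ne_zero,
      show (1:ℕ) = 2*0+1 from rfl, pf_odd]; decide
lemma pf3 : paperfold 3 = true := by
  rw [show (3:ℕ) = 2*1+1 from rfl, pf_odd]; decide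
lemma pf4 : paperfold 4 = false := by
  rw [show (4:ℕ) = 2*2 from rfl, pf_double 2 two_ne_zero, pf2]
lemma pf5 : paperfold 5 = false := by
  rw [show (5:ℕ) = 2*2+1 from rfl, pf_odd]; decide
lemma pf6 : paperfold 6 = true := by
  rw [show (6:ℕ) = 2*3 from rfl, pf_double 3 (by norm_num), pf3]
lemma pf7 : paperfold 7 = true := by
  rw [show (7:ℕ) = 2*3+1 from rfl, pf_odd]; decide
lemma pf12 : paperfold 12 = true := by
  rw [show (12:ℕ) = 2*6 from rfl, pf_double 6 (by norm_num), pf6]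
lemma pf13 : paperfold 13 = false := by
  rw [show (13:ℕ) = 2*6+1 from rfl, pf_odd]; decide

lemma db2 : db 2 = 1 := by simp [db, pf2, pf3]
lemma db4 : db 4 = 0 := by simp [db, pf4, pf5]
lemma db6 : db 6 = 0 := by simp [db, pf6, pf7]
lemma db12 : db 12 = 1 := by simp [db, pf12, pf13]

lemma altL_ne_of_length {b c : Bool} {k l : ℕ} (h : k ≠ l) : altL b k ≠ altL c l := by
  intro he
  exact h (by rw [← altL_length b k, he, altL_length])

lemma altL_ne_head (k l : ℕ) : altL false (k+1) ≠ altL true (l+1) := by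
  simp [altL]

theorem stmt13 (n : ℕ) (hn : 1 ≤ n) :
    redFactorComplexity paperfold (2 * n) = 4 := by
  obtain ⟨k, rfl⟩ : ∃ k, n = k + 1 := ⟨n - 1, by omega⟩
  have hset : { u : List Bool | ∃ i ≥ 1, u = red (factorAt paperfold i (2 * (k+1))) } =
      {altL false (k+1), altL false (k+2), altL true (k+1), altL true (k+2)} := by
    ext u
    simp only [Set.mem_setOf_eq, Set.mem_insert_iff, Set.mem_singleton_iff, ge_iff_le]
    constructor
    · rintro ⟨i, hi, rfl⟩
      rcases Nat.even_or_odd i with ⟨m, hm⟩ | ⟨m, hm⟩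
      · have hm' : i = 2*m := by omega
        subst hm'
        rw [show 2*(k+1) = 2*k+2 by ring, red_even k m]
        have hdb : db (2*m) = 0 ∨ db (2*m) = 1 := by unfold db; split <;> simp
        rcases hdb with h0 | h0 <;> rw [h0] <;> cases hb : paperfold (2*m) <;>
          rw [show k+1+0 = k+1 from rfl] <;> tauto
      · have hm' : i = 2*m+1 := by omega
        subst hm'
        rw [show 2*(k+1) = 2*k+2 by ring, red_odd k m]
        have hdb : db (2*m+2*k+1) = 0 ∨ db (2*m+2*k+1) = 1 := by unfold db; split <;> simp
        rcases hdb with h0 | h0 <;> rw [h0] <;> cases hb : paperfold (2*m+1) <;>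
          rw [show k+1+0 = k+1 from rfl] <;> tauto
    · have he2 := red_even k 1
      have he4 := red_even k 2
      have he6 := red_even k 3
      have he12 := red_even k 6
      norm_num [pf2, pf4, pf6, pf12, db2, db4, db6, db12] at he2 he4 he6 he12
      rintro (rfl | rfl | rfl | rfl)
      · exact ⟨4, by norm_num, by rw [show 2*(k+1) = 2*k+2 by ring, he4]⟩
      · exact ⟨2, by norm_num, by rw [show 2*(k+1) = 2*k+2 by ring, he2]⟩
      · exact ⟨6, by norm_num, by rw [show 2*(k+1) = 2*k+2 by ring, he6]⟩
      · exact ⟨12, by norm_num, by rw [show 2*(k+1) = 2*k+2 by ring, he12]⟩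
  rw [redFactorComplexity, hset]
  have h1 : altL false (k+1) ∉
      ({altL false (k+2), altL true (k+1), altL true (k+2)} : Set (List Bool)) := by
    simp only [Set.mem_insert_iff, Set.mem_singleton_iff]
    push_neg
    exact ⟨altL_ne_of_length (by omega), altL_ne_head k k,
      altL_ne_of_length (by omega)⟩
  have h2 : altL false (k+2) ∉ ({altL true (k+1), altL true (k+2)} : Set (List Bool)) := by
    simp only [Set.mem_insert_iff, Set.mem_singleton_iff]
    push_neg
    exact ⟨altL_ne_of_length (by omega), altL_ne_head (k+1) (k+1)⟩
  have h3 : altL true (k+1) ∉ ({altL true (k+2)} : Set (List Bool)) := by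
    simp only [Set.mem_singleton_iff]
    exact altL_ne_of_length (by omega)
  rw [Set.ncard_insert_of_notMem h1, Set.ncard_insert_of_notMem h2,
      Set.ncard_insert_of_notMem h3, Set.ncard_singleton]
end
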